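/- Let E be the infinite-dimensional Grassmann algebra over a field F of characteristic zero. The tensor product E ⊗_F E has the primeness property on central polynomials: if f·g is a proper central polynomial for E ⊗ E, with f and g in disjoint sets of variables, then both f and g are proper central polynomials for E ⊗ E. -/

import Mathlib

open scoped TensorProduct

/-- Evaluation of a noncommutative polynomial in `n` variables at elements of `A`. -/
noncomputable def polyEval {F : Type*} [CommSemiring F] {A : Type*} [Semiring A] [Algebra F A]
    {n : ℕ} (f : FreeAlgebra F (Fin n)) (v : Fin n → A) : A :=
  FreeAlgebra.lift F v f

/-- `f` is a polynomial identity for `A`. -/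
def IsIdPoly (F : Type*) [CommSemiring F] (A : Type*) [Semiring A] [Algebra F A]
    {n : ℕ} (f : FreeAlgebra F (Fin n)) : Prop :=
  ∀ v : Fin n → A, polyEval f v = 0

/-- `f` is a central polynomial for `A`. -/
def IsCentralPoly (F : Type*) [CommSemiring F] (A : Type*) [Semiring A] [Algebra F A]
    {n : ℕ} (f : FreeAlgebra F (Fin n)) : Prop :=
  ∀ v : Fin n → A, polyEval f v ∈ Set.center A

/-- `f` is a proper central polynomial for `A`. -/
def IsProperCentralPoly (F : Type*) [CommSemiring F] (A : Type*) [Semiring A] [Algebra F A]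
    {n : ℕ} (f : FreeAlgebra F (Fin n)) : Prop :=
  IsCentralPoly F A f ∧ ¬ IsIdPoly F A f

/-- The product `f·g` of two polynomials in disjoint sets of variables. -/
noncomputable def disjProd {F : Type*} [CommSemiring F] {r s : ℕ}
    (f : FreeAlgebra F (Fin r)) (g : FreeAlgebra F (Fin s)) : FreeAlgebra F (Fin (r + s)) :=
  FreeAlgebra.lift F (fun i => FreeAlgebra.ι F (Fin.castAdd s i)) f *
    FreeAlgebra.lift F (fun i => FreeAlgebra.ι F (Fin.natAdd r i)) g

/-- `A` has the primeness property on central polynomials. -/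
def HasPrimeness (F : Type*) [CommSemiring F] (A : Type*) [Semiring A] [Algebra F A] : Prop :=
  (∃ (n : ℕ) (f : FreeAlgebra F (Fin n)), IsProperCentralPoly F A f) ∧
    ∀ (r s : ℕ) (f : FreeAlgebra F (Fin r)) (g : FreeAlgebra F (Fin s)),
      IsProperCentralPoly F A (disjProd f g) →
        IsProperCentralPoly F A f ∧ IsProperCentralPoly F A g

/-- The multilinear polynomial `∑ σ, λ σ • x_{σ(1)} ⋯ x_{σ(n)}`. -/
noncomputable def mlin {F : Type*} [CommSemiring F] {n : ℕ} (lam : Equiv.Perm (Fin n) → F) :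
    FreeAlgebra F (Fin n) :=
  ∑ σ : Equiv.Perm (Fin n), lam σ • (List.ofFn fun i => FreeAlgebra.ι F (σ i)).prod

/-- Direct evaluation of the multilinear polynomial with coefficients `lam`. -/
noncomputable def mlinEval {F : Type*} [CommSemiring F] {A : Type*} [Semiring A] [Algebra F A]
    {n : ℕ} (lam : Equiv.Perm (Fin n) → F) (v : Fin n → A) : A :=
  ∑ σ : Equiv.Perm (Fin n), lam σ • (List.ofFn fun i => v (σ i)).prod


noncomputable section GrassmannAux

set_option linter.unusedSectionVars false

variable (F : Type*) [Field F] [CharZero F]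

abbrev GV : Type _ := (ℕ →₀ F)
abbrev GE : Type _ := ExteriorAlgebra F (GV F)
abbrev GA : Type _ := GE F ⊗[F] GE F

variable {F}

/-- the `k`-th Grassmann generator -/
noncomputable def gth (k : ℕ) : GE F := ExteriorAlgebra.ι F (Finsupp.single k (1 : F))

/-- product of generators along a list -/
noncomputable def gw (l : List ℕ) : GE F := (l.map gth).prod

lemma gth_sq (k : ℕ) : (gth k : GE F) * gth k = 0 := ExteriorAlgebra.ι_sq_zero _

lemma gth_add_swap (i j : ℕ) : (gth i : GE F) * gth j + gth j * gth i = 0 := by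
  have h := ExteriorAlgebra.ι_sq_zero (R := F)
    (Finsupp.single i (1 : F) + Finsupp.single j (1 : F))
  rw [map_add, add_mul, mul_add, mul_add] at h
  have hi := gth_sq (F := F) i
  have hj := gth_sq (F := F) j
  unfold gth at hi hj ⊢
  rw [hi, hj] at h
  simpa using h

lemma gth_anticomm (i j : ℕ) : (gth i : GE F) * gth j = -(gth j * gth i) :=
  eq_neg_of_add_eq_zero_left (gth_add_swap i j)

@[simp] lemma gw_nil : (gw [] : GE F) = 1 := rfl

@[simp] lemma gw_cons (k : ℕ) (l : List ℕ) : (gw (k :: l) : GE F) = gth k * gw l := by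
  simp [gw]

lemma gw_append (l l' : List ℕ) : (gw (l ++ l') : GE F) = gw l * gw l' := by
  simp [gw, List.prod_append]

/-- moving a generator across a word -/
lemma gth_mul_gw (k : ℕ) (l : List ℕ) :
    (gth k : GE F) * gw l = ((-1 : F) ^ l.length) • (gw l * gth k) := by
  induction l with
  | nil => simp
  | cons j l ih =>
    rw [gw_cons, ← mul_assoc, gth_anticomm, neg_mul, mul_assoc, ih, List.length_cons, pow_succ,
      mul_comm ((-1 : F) ^ l.length) (-1), mul_smul, mul_smul_comm, mul_assoc, neg_one_smul]

lemma gth_mul_gw_mem (k : ℕ) (l : List ℕ) (h : k ∈ l) : (gth k : GE F) * gw l = 0 := by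
  induction l with
  | nil => simp at h
  | cons j l ih =>
    rw [gw_cons, ← mul_assoc]
    rcases List.mem_cons.mp h with h1 | h2
    · subst h1; rw [gth_sq, zero_mul]
    · rw [gth_anticomm, neg_mul, mul_assoc, ih h2, mul_zero, neg_zero]

lemma gw_mul_gth_mem (k : ℕ) (l : List ℕ) (h : k ∈ l) : (gw l : GE F) * gth k = 0 := by
  have h1 := gth_mul_gw (F := F) k l
  rw [gth_mul_gw_mem k l h] at h1
  rcases smul_eq_zero.mp h1.symm with h3 | h4
  · exact absurd h3 (pow_ne_zero _ (neg_ne_zero.mpr one_ne_zero))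
  · exact h4

lemma gw_mul_gw_comm (l l' : List ℕ) :
    (gw l : GE F) * gw l' = ((-1 : F) ^ (l.length * l'.length)) • (gw l' * gw l) := by
  induction l with
  | nil => simp
  | cons j l ih =>
    rw [gw_cons, mul_assoc, ih, mul_smul_comm, ← mul_assoc, gth_mul_gw, smul_mul_assoc, smul_smul,
      ← pow_add, List.length_cons]
    rw [mul_assoc (gw l')]
    rw [← gw_cons]
    congr 1
    ring_nf

end GrassmannAux

theorem List.eq_of_perm_of_sorted {α : Type*} {r : α → α → Prop} [Std.Antisymm r]
    {l₁ l₂ : List α} (p : l₁.Perm l₂) (s₁ : l₁.Pairwise r) (s₂ : l₂.Pairwise r) : l₁ = l₂ :=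
  p.eq_of_pairwise' s₁ s₂

section Chunk2
set_option linter.unusedSectionVars false
variable {F : Type*} [Field F] [CharZero F]

lemma list_sorted_append {l₁ l₂ : List ℕ} :
    List.Pairwise (· ≤ ·) (l₁ ++ l₂) ↔
      List.Pairwise (· ≤ ·) l₁ ∧ List.Pairwise (· ≤ ·) l₂ ∧ ∀ a ∈ l₁, ∀ b ∈ l₂, a ≤ b :=
  List.pairwise_append

/-- sorted monomial attached to a finite set -/
noncomputable def ges (S : Finset ℕ) : GE F := gw (S.sort (· ≤ ·))

@[simp] lemma ges_empty : (ges ∅ : GE F) = 1 := by simp [ges]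

@[simp] lemma ges_singleton (k : ℕ) : (ges {k} : GE F) = gth k := by
  simp [ges, Finset.sort_singleton]

lemma sort_sep_union (S S' : Finset ℕ) (h : ∀ i ∈ S, ∀ j ∈ S', i < j) :
    (S ∪ S').sort (· ≤ ·) = S.sort (· ≤ ·) ++ S'.sort (· ≤ ·) := by
  apply List.eq_of_perm_of_sorted ?_ (Finset.pairwise_sort _ _)
  · rw [list_sorted_append]
    refine ⟨Finset.pairwise_sort _ _, Finset.pairwise_sort _ _, ?_⟩
    intro a ha b hb
    exact le_of_lt (h a ((Finset.mem_sort _).mp ha) b ((Finset.mem_sort _).mp hb))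
  · apply List.perm_of_nodup_nodup_toFinset_eq (Finset.sort_nodup _ _)
    · rw [List.nodup_append]
      refine ⟨Finset.sort_nodup _ _, Finset.sort_nodup _ _, ?_⟩
      intro a ha b hb hab; subst hab
      exact lt_irrefl a (h a ((Finset.mem_sort _).mp ha) a ((Finset.mem_sort _).mp hb))
    · rw [List.toFinset_append, Finset.sort_toFinset, Finset.sort_toFinset,
        Finset.sort_toFinset]

lemma ges_mul_ges_sep (S S' : Finset ℕ) (h : ∀ i ∈ S, ∀ j ∈ S', i < j) :
    (ges S : GE F) * ges S' = ges (S ∪ S') := by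
  rw [ges, ges, ges, sort_sep_union S S' h, gw_append]

lemma ges_mul_gth_sep (S : Finset ℕ) (N : ℕ) (h : ∀ i ∈ S, i < N) :
    (ges S : GE F) * gth N = ges (insert N S) := by
  have h2 : insert N S = S ∪ {N} := by ext i; simp [or_comm]
  rw [h2, ← ges_mul_ges_sep S {N} (by simpa using h), ges_singleton]

lemma gth_mul_ges_mem (k : ℕ) (S : Finset ℕ) (h : k ∈ S) : (gth k : GE F) * ges S = 0 :=
  gth_mul_gw_mem k _ ((Finset.mem_sort _).mpr h)

lemma ges_mul_gth_mem (k : ℕ) (S : Finset ℕ) (h : k ∈ S) : (ges S : GE F) * gth k = 0 :=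
  gw_mul_gth_mem k _ ((Finset.mem_sort _).mpr h)

lemma sort_insert_split (k : ℕ) (S : Finset ℕ) (hk : k ∉ S) :
    (insert k S).sort (· ≤ ·)
      = (S.sort (· ≤ ·)).filter (fun x => decide (x < k)) ++
        k :: (S.sort (· ≤ ·)).filter (fun x => !(decide (x < k))) := by
  apply List.eq_of_perm_of_sorted ?_ (Finset.pairwise_sort _ _)
  · rw [list_sorted_append]
    refine ⟨(Finset.pairwise_sort S (· ≤ ·)).filter _, ?_, ?_⟩
    · rw [List.pairwise_cons]
      refine ⟨?_, (Finset.pairwise_sort S (· ≤ ·)).filter _⟩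
      intro b hb
      have h2 := (List.mem_filter.mp hb).2
      simp only [Bool.not_eq_true', decide_eq_false_iff_not, not_lt] at h2
      exact h2
    · intro a ha b hb
      have ha' : a < k := by simpa using (List.mem_filter.mp ha).2
      rcases List.mem_cons.mp hb with rfl | hb'
      · exact le_of_lt ha'
      · have h3 : ¬ b < k := by
          have := (List.mem_filter.mp hb').2
          simpa using this
        exact le_of_lt (lt_of_lt_of_le ha' (le_of_not_gt h3))
  · apply List.perm_of_nodup_nodup_toFinset_eq (Finset.sort_nodup _ _)
    · rw [List.nodup_append]
      refine ⟨(Finset.sort_nodup _ _).filter _, ?_, ?_⟩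
      · rw [List.nodup_cons]
        refine ⟨fun hmem => ?_, (Finset.sort_nodup _ _).filter _⟩
        exact hk ((Finset.mem_sort _).mp (List.mem_of_mem_filter hmem))
      · intro a ha b hb hab; subst hab
        rcases List.mem_cons.mp hb with rfl | hb'
        · exact hk ((Finset.mem_sort _).mp (List.mem_of_mem_filter ha))
        · have h1 : a < k := by simpa using (List.mem_filter.mp ha).2
          have h2 : ¬ a < k := by
            have := (List.mem_filter.mp hb').2
            simpa using this
          exact h2 h1
    · ext i
      simp only [List.toFinset_append, Finset.mem_union, List.mem_toFinset, List.mem_filter,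
        Finset.sort_toFinset, List.toFinset_cons, Finset.mem_insert, Finset.mem_sort,
        decide_eq_true_eq, Bool.not_eq_true', decide_eq_false_iff_not, not_lt]
      constructor
      · rintro (rfl | hi)
        · right; left; rfl
        · by_cases hik : i < k
          · left; exact ⟨hi, hik⟩
          · right; right; exact ⟨hi, le_of_not_gt hik⟩
      · rintro (hi | rfl | hi)
        · right; exact hi.1
        · left; rfl
        · right; exact hi.1

lemma gth_mul_ges (k : ℕ) (S : Finset ℕ) :
    ∃ c : F, (gth k : GE F) * ges S = c • ges (insert k S) := by
  by_cases hk : k ∈ S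
  · exact ⟨0, by rw [gth_mul_ges_mem k S hk, zero_smul]⟩
  · set l₁ := (S.sort (· ≤ ·)).filter (fun x => decide (x < k)) with hl₁
    set l₂ := (S.sort (· ≤ ·)).filter (fun x => !(decide (x < k))) with hl₂
    refine ⟨(-1 : F) ^ l₁.length, ?_⟩
    have hsplit : S.sort (· ≤ ·) = l₁ ++ l₂ := by
      apply List.eq_of_perm_of_sorted (List.filter_append_perm _ _).symm (Finset.pairwise_sort _ _)
      rw [list_sorted_append]
      refine ⟨(Finset.pairwise_sort S (· ≤ ·)).filter _, (Finset.pairwise_sort S (· ≤ ·)).filter _, ?_⟩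
      intro a ha b hb
      have h1 : a < k := by simpa using (List.mem_filter.mp ha).2
      have h2 : ¬ b < k := by
        have := (List.mem_filter.mp hb).2
        simpa using this
      exact le_of_lt (lt_of_lt_of_le h1 (le_of_not_gt h2))
    rw [ges, ges, sort_insert_split k S hk, ← hl₁, ← hl₂, hsplit, gw_append, gw_append, gw_cons,
      ← mul_assoc, gth_mul_gw, smul_mul_assoc, mul_assoc]

end Chunk2

section Chunk3
set_option linter.unusedSectionVars false
variable {F : Type*} [Field F] [CharZero F]

/-- The dual "coordinate" functional on V -/
noncomputable def gd (k : ℕ) : Module.Dual F (GV F) := Finsupp.lapply k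

@[simp] lemma gd_single (k j : ℕ) : (gd k : Module.Dual F (GV F)) (Finsupp.single j 1)
    = if j = k then 1 else 0 := by
  simp [gd, Finsupp.single_apply]

/-- contraction by the k-th coordinate -/
noncomputable def gphi (k : ℕ) : GE F →ₗ[F] GE F :=
  CliffordAlgebra.contractLeft (Q := (0 : QuadraticForm F (GV F))) (gd k)

lemma gphi_gth_mul (k j : ℕ) (x : GE F) :
    gphi k (gth j * x) = (if j = k then (1:F) else 0) • x - gth j * gphi k x := by
  rw [gphi, gth, CliffordAlgebra.contractLeft_ι_mul, gd_single]

@[simp] lemma gphi_one (k : ℕ) : gphi k (1 : GE F) = 0 :=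
  CliffordAlgebra.contractLeft_one _ _

lemma gphi_gw_notmem (k : ℕ) (l : List ℕ) (h : k ∉ l) : gphi k (gw l : GE F) = 0 := by
  induction l with
  | nil => simp
  | cons j l ih =>
    rw [gw_cons, gphi_gth_mul, if_neg (by rintro rfl; exact h (List.mem_cons_self)),
      ih (fun hl => h (List.mem_cons_of_mem j hl)), zero_smul, mul_zero, sub_zero]

lemma gphi_gw_mem (k : ℕ) (l : List ℕ) (hnd : l.Nodup) (h : k ∈ l) :
    ∃ c : F, c ≠ 0 ∧ gphi k (gw l : GE F) = c • gw (l.erase k) := by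
  induction l with
  | nil => simp at h
  | cons j l ih =>
    rcases List.mem_cons.mp h with rfl | h2
    · refine ⟨1, one_ne_zero, ?_⟩
      rw [gw_cons, gphi_gth_mul, if_pos rfl, gphi_gw_notmem k l (List.nodup_cons.mp hnd).1,
        mul_zero, sub_zero, List.erase_cons_head]
    · have hjk : j ≠ k := fun hj => (List.nodup_cons.mp hnd).1 (hj ▸ h2)
      obtain ⟨c, hc, hrw⟩ := ih (List.nodup_cons.mp hnd).2 h2
      refine ⟨-c, neg_ne_zero.mpr hc, ?_⟩
      rw [gw_cons, gphi_gth_mul, if_neg hjk, zero_smul, zero_sub, hrw, mul_smul_comm,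
        List.erase_cons_tail (by simpa using hjk), gw_cons, neg_smul]

lemma sort_erase (k : ℕ) (S : Finset ℕ) :
    (S.sort (· ≤ ·)).erase k = (S.erase k).sort (· ≤ ·) := by
  apply List.eq_of_perm_of_sorted ?_ ((Finset.pairwise_sort S (· ≤ ·)).erase _)
    (Finset.pairwise_sort _ _)
  apply List.perm_of_nodup_nodup_toFinset_eq ((Finset.sort_nodup _ _).erase _)
    (Finset.sort_nodup _ _)
  ext i
  simp [List.Nodup.mem_erase_iff (Finset.sort_nodup _ _), Finset.mem_sort,
    Finset.mem_erase]

lemma gphi_ges_notmem (k : ℕ) (S : Finset ℕ) (h : k ∉ S) : gphi k (ges S : GE F) = 0 :=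
  gphi_gw_notmem k _ (fun hl => h ((Finset.mem_sort _).mp hl))

lemma gphi_ges_mem (k : ℕ) (S : Finset ℕ) (h : k ∈ S) :
    ∃ c : F, c ≠ 0 ∧ gphi k (ges S : GE F) = c • ges (S.erase k) := by
  obtain ⟨c, hc, hrw⟩ := gphi_gw_mem (F := F) k (S.sort (· ≤ ·)) (Finset.sort_nodup _ _)
    ((Finset.mem_sort _).mpr h)
  exact ⟨c, hc, by rw [ges, hrw, sort_erase, ges]⟩

/-- iterated contraction -/
noncomputable def PhiL : List ℕ → (GE F →ₗ[F] GE F)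
  | [] => LinearMap.id
  | k :: L => (PhiL L) ∘ₗ gphi k

@[simp] lemma PhiL_nil (x : GE F) : PhiL [] x = x := rfl
@[simp] lemma PhiL_cons (k : ℕ) (L : List ℕ) (x : GE F) :
    PhiL (k :: L) x = PhiL L (gphi k x) := rfl

variable (F) in
lemma PhiL_works : True := trivial

lemma PhiL_ges_sub (L : List ℕ) (hL : L.Nodup) (T : Finset ℕ) (h : L.toFinset ⊆ T) :
    ∃ c : F, c ≠ 0 ∧ PhiL L (ges T : GE F) = c • ges (T \ L.toFinset) := by
  induction L generalizing T with
  | nil => exact ⟨1, one_ne_zero, by simp⟩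
  | cons k L ih =>
    have hkT : k ∈ T := h (by simp)
    have hkL : k ∉ L := (List.nodup_cons.mp hL).1
    obtain ⟨c, hc, hrw⟩ := gphi_ges_mem (F := F) k T hkT
    have hsub : L.toFinset ⊆ T.erase k := by
      intro i hi
      refine Finset.mem_erase.mpr ⟨fun hik => hkL (hik ▸ List.mem_toFinset.mp hi), ?_⟩
      exact h (by simp [List.mem_toFinset.mp hi])
    obtain ⟨c', hc', hrw'⟩ := ih (List.nodup_cons.mp hL).2 (T.erase k) hsub
    refine ⟨c * c', mul_ne_zero hc hc', ?_⟩
    rw [PhiL_cons, hrw, map_smul, hrw', smul_smul]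
    congr 2
    ext i
    simp only [Finset.mem_sdiff, Finset.mem_erase, List.toFinset_cons, Finset.mem_insert,
      List.mem_toFinset]
    tauto

lemma PhiL_ges_nsub (L : List ℕ) (T : Finset ℕ) (h : ¬ (L.toFinset ⊆ T)) :
    PhiL L (ges T : GE F) = 0 := by
  induction L generalizing T with
  | nil => simp at h
  | cons k L ih =>
    by_cases hkT : k ∈ T
    · obtain ⟨c, _, hrw⟩ := gphi_ges_mem (F := F) k T hkT
      rw [PhiL_cons, hrw, map_smul, ih (T.erase k) ?_, smul_zero]
      intro hsub
      apply h
      intro i hi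
      rcases (by simpa using hi : i = k ∨ i ∈ L) with rfl | hiL
      · exact hkT
      · exact Finset.mem_of_mem_erase (hsub (List.mem_toFinset.mpr hiL))
    · rw [PhiL_cons, gphi_ges_notmem k T hkT, map_zero]

/-- the coefficient functional of the basis monomial `ges S` -/
noncomputable def gcoef (S : Finset ℕ) : GE F →ₗ[F] F :=
  (ExteriorAlgebra.algebraMapInv).toLinearMap ∘ₗ PhiL (S.sort (· ≤ ·))

lemma amInv_gth (k : ℕ) : ExteriorAlgebra.algebraMapInv (gth k : GE F) = 0 := by
  simp [gth, ExteriorAlgebra.algebraMapInv, ExteriorAlgebra.lift_ι_apply]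

lemma amInv_ges_ne (U : Finset ℕ) (h : U ≠ ∅) :
    ExteriorAlgebra.algebraMapInv (ges U : GE F) = 0 := by
  have : U.sort (· ≤ ·) ≠ [] := by
    intro hnil
    apply h
    ext i
    simp [← Finset.mem_sort (α := ℕ) (· ≤ ·), hnil]
  obtain ⟨k, l, hkl⟩ := List.exists_cons_of_ne_nil this
  rw [ges, hkl, gw_cons, map_mul, amInv_gth, zero_mul]

lemma gcoef_ges_self (S : Finset ℕ) :
    ∃ c : F, c ≠ 0 ∧ gcoef S (ges S : GE F) = c := by
  obtain ⟨c, hc, hrw⟩ := PhiL_ges_sub (F := F) (S.sort (· ≤ ·)) (Finset.sort_nodup _ _) S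
    (by rw [Finset.sort_toFinset])
  refine ⟨c, hc, ?_⟩
  rw [gcoef, LinearMap.comp_apply, hrw, Finset.sort_toFinset, Finset.sdiff_self]
  simp [AlgHom.toLinearMap_apply]

lemma gcoef_ges_ne (S T : Finset ℕ) (h : T ≠ S) : gcoef S (ges T : GE F) = 0 := by
  by_cases hsub : S ⊆ T
  · obtain ⟨c, hc, hrw⟩ := PhiL_ges_sub (F := F) (S.sort (· ≤ ·)) (Finset.sort_nodup _ _) T
      (by rw [Finset.sort_toFinset]; exact hsub)
    have hne : T \ S ≠ ∅ := by
      intro hempty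
      exact h (Finset.eq_of_subset_of_card_le hsub (by
        have := Finset.card_sdiff_of_subset hsub
        rw [hempty] at this
        simp at this
        omega)).symm
    rw [gcoef, LinearMap.comp_apply, hrw, Finset.sort_toFinset, map_smul,
      AlgHom.toLinearMap_apply, amInv_ges_ne _ hne, smul_zero]
  · rw [gcoef, LinearMap.comp_apply, PhiL_ges_nsub, map_zero]
    rw [Finset.sort_toFinset]
    exact hsub

end Chunk3

section Chunk4
set_option linter.unusedSectionVars false
variable {F : Type*} [Field F] [CharZero F]

lemma ixi_mul_ges_mem (v : GV F) (S : Finset ℕ) :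
    ExteriorAlgebra.ι F v * ges S ∈ Submodule.span F (Set.range (ges (F := F))) := by
  induction v using Finsupp.induction with
  | zero => simp
  | single_add a b f _ _ ih =>
    rw [map_add, add_mul]
    refine Submodule.add_mem _ ?_ ih
    have hb : Finsupp.single a b = b • Finsupp.single a (1 : F) := by
      rw [Finsupp.smul_single, smul_eq_mul, mul_one]
    rw [hb, map_smul, smul_mul_assoc]
    obtain ⟨c, hc⟩ := gth_mul_ges (F := F) a S
    rw [show ExteriorAlgebra.ι F (Finsupp.single a (1:F)) = gth a from rfl, hc, smul_smul]
    exact Submodule.smul_mem _ _ (Submodule.subset_span ⟨_, rfl⟩)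

lemma mul_ges_mem (x : GE F) (S : Finset ℕ) :
    x * ges S ∈ Submodule.span F (Set.range (ges (F := F))) := by
  induction x using ExteriorAlgebra.induction generalizing S with
  | algebraMap r =>
    rw [← Algebra.smul_def]
    exact Submodule.smul_mem _ _ (Submodule.subset_span ⟨_, rfl⟩)
  | ι v => exact ixi_mul_ges_mem v S
  | mul a b iha ihb =>
    rw [mul_assoc]
    have hmem := ihb S
    refine Submodule.span_induction ?_ ?_ ?_ ?_ hmem
    · rintro y ⟨T, rfl⟩
      exact iha T
    · rw [mul_zero]; exact Submodule.zero_mem _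
    · intro y z _ _ hy hz
      rw [mul_add]; exact Submodule.add_mem _ hy hz
    · intro c y _ hy
      rw [mul_smul_comm]; exact Submodule.smul_mem _ _ hy
  | add a b iha ihb =>
    rw [add_mul]; exact Submodule.add_mem _ (iha S) (ihb S)

lemma span_ges_top : Submodule.span F (Set.range (ges (F := F))) = ⊤ := by
  rw [Submodule.eq_top_iff']
  intro x
  have := mul_ges_mem x ∅
  rwa [ges_empty, mul_one] at this

end Chunk4

section Chunk5
set_option linter.unusedSectionVars false
variable {F : Type*} [Field F] [CharZero F]

/-- monomial basis of `GA` -/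
noncomputable def gm (p : Finset ℕ × Finset ℕ) : GA F := ges p.1 ⊗ₜ[F] ges p.2

/-- coefficient functionals on `GA` -/
noncomputable def gL (p : Finset ℕ × Finset ℕ) : GA F →ₗ[F] F :=
  (TensorProduct.lid F F).toLinearMap ∘ₗ TensorProduct.map (gcoef p.1) (gcoef p.2)

lemma gL_tmul (p : Finset ℕ × Finset ℕ) (a b : GE F) :
    gL p (a ⊗ₜ[F] b) = gcoef p.1 a * gcoef p.2 b := by
  simp [gL, TensorProduct.map_tmul, TensorProduct.lid_tmul, smul_eq_mul]

lemma gL_gm_self (p : Finset ℕ × Finset ℕ) : gL p (gm p : GA F) ≠ 0 := by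
  obtain ⟨c1, hc1, hrw1⟩ := gcoef_ges_self (F := F) p.1
  obtain ⟨c2, hc2, hrw2⟩ := gcoef_ges_self (F := F) p.2
  rw [gm, gL_tmul, hrw1, hrw2]
  exact mul_ne_zero hc1 hc2

lemma gL_gm_ne (p q : Finset ℕ × Finset ℕ) (h : q ≠ p) : gL p (gm q : GA F) = 0 := by
  rw [gm, gL_tmul]
  by_cases h1 : q.1 = p.1
  · have h2 : q.2 ≠ p.2 := fun h2 => h (Prod.ext h1 h2)
    rw [gcoef_ges_ne p.2 q.2 h2, mul_zero]
  · rw [gcoef_ges_ne p.1 q.1 h1, zero_mul]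

lemma ges_tmul_mem_span (S : Finset ℕ) (y : GE F) :
    (ges S ⊗ₜ[F] y : GA F) ∈ Submodule.span F (Set.range (gm (F := F))) := by
  have hy : y ∈ Submodule.span F (Set.range (ges (F := F))) := by rw [span_ges_top]; trivial
  refine Submodule.span_induction ?_ ?_ ?_ ?_ hy
  · rintro z ⟨T, rfl⟩
    exact Submodule.subset_span ⟨(S, T), rfl⟩
  · rw [TensorProduct.tmul_zero]; exact Submodule.zero_mem _
  · intro a b _ _ ha hb
    rw [TensorProduct.tmul_add]; exact Submodule.add_mem _ ha hb
  · intro c a _ ha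
    rw [TensorProduct.tmul_smul]; exact Submodule.smul_mem _ _ ha

lemma tmul_mem_span (x y : GE F) :
    (x ⊗ₜ[F] y : GA F) ∈ Submodule.span F (Set.range (gm (F := F))) := by
  have hx : x ∈ Submodule.span F (Set.range (ges (F := F))) := by rw [span_ges_top]; trivial
  refine Submodule.span_induction ?_ ?_ ?_ ?_ hx
  · intro z hz
    obtain ⟨S, rfl⟩ := hz
    exact ges_tmul_mem_span S y
  · rw [TensorProduct.zero_tmul]; exact Submodule.zero_mem _
  · intro a b _ _ ha hb
    rw [TensorProduct.add_tmul]; exact Submodule.add_mem _ ha hb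
  · intro c a _ ha
    rw [← TensorProduct.smul_tmul']; exact Submodule.smul_mem _ _ ha

lemma span_gm_top : Submodule.span F (Set.range (gm (F := F))) = ⊤ := by
  rw [Submodule.eq_top_iff']
  intro z
  have hz : z ∈ Submodule.span F {t : GA F | ∃ m n, m ⊗ₜ n = t} := by
    rw [TensorProduct.span_tmul_eq_top]; trivial
  refine Submodule.span_induction ?_ ?_ ?_ ?_ hz
  · rintro t ⟨m, n, rfl⟩
    exact tmul_mem_span m n
  · exact Submodule.zero_mem _
  · intro a b _ _ ha hb; exact Submodule.add_mem _ ha hb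
  · intro c a _ ha; exact Submodule.smul_mem _ _ ha

/-- index sets bounded below `N` -/
def smallP (N : ℕ) : Set (Finset ℕ × Finset ℕ) :=
  {p | p.1 ⊆ Finset.range N ∧ p.2 ⊆ Finset.range N}

/-- index sets bounded above by `N` -/
def largeP (N : ℕ) : Set (Finset ℕ × Finset ℕ) :=
  {p | (∀ i ∈ p.1, N ≤ i) ∧ (∀ i ∈ p.2, N ≤ i)}

noncomputable def BN (N : ℕ) : Submodule F (GA F) := Submodule.span F (gm '' smallP N)
noncomputable def CN (N : ℕ) : Submodule F (GA F) := Submodule.span F (gm '' largeP N)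

lemma exists_BN (x : GA F) : ∃ N, x ∈ BN (F := F) N := by
  have hx : x ∈ Submodule.span F (Set.range (gm (F := F))) := by rw [span_gm_top]; trivial
  rw [← Set.image_univ] at hx
  rw [Finsupp.mem_span_image_iff_linearCombination] at hx
  obtain ⟨c, _, rfl⟩ := hx
  refine ⟨(c.support.sup fun p => (p.1 ∪ p.2).sup id) + 1, ?_⟩
  rw [Finsupp.linearCombination_apply, Finsupp.sum]
  refine Submodule.sum_mem _ ?_
  intro p hp
  refine Submodule.smul_mem _ _ (Submodule.subset_span ⟨p, ⟨?_, ?_⟩, rfl⟩)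
  · intro i hi
    rw [Finset.mem_range]
    have h1 : i ≤ (p.1 ∪ p.2).sup id := Finset.le_sup (f := id) (Finset.mem_union_left _ hi)
    have h2 : (p.1 ∪ p.2).sup id ≤ c.support.sup fun p => (p.1 ∪ p.2).sup id :=
      Finset.le_sup (f := fun p : Finset ℕ × Finset ℕ => (p.1 ∪ p.2).sup id) hp
    omega
  · intro i hi
    rw [Finset.mem_range]
    have h1 : i ≤ (p.1 ∪ p.2).sup id := Finset.le_sup (f := id) (Finset.mem_union_right _ hi)
    have h2 : (p.1 ∪ p.2).sup id ≤ c.support.sup fun p => (p.1 ∪ p.2).sup id :=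
      Finset.le_sup (f := fun p : Finset ℕ × Finset ℕ => (p.1 ∪ p.2).sup id) hp
    omega

lemma gm_mul_gm (p q : Finset ℕ × Finset ℕ) :
    (gm p : GA F) * gm q = (ges p.1 * ges q.1) ⊗ₜ[F] (ges p.2 * ges q.2) :=
  Algebra.TensorProduct.tmul_mul_tmul _ _ _ _

lemma gm_mul_gm_sep (N : ℕ) (p q : Finset ℕ × Finset ℕ) (hp : p ∈ smallP N)
    (hq : q ∈ largeP N) :
    (gm p : GA F) * gm q = gm (p.1 ∪ q.1, p.2 ∪ q.2) := by
  rw [gm_mul_gm, ges_mul_ges_sep _ _ (fun i hi j hj => lt_of_lt_of_le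
      (Finset.mem_range.mp (hp.1 hi)) (hq.1 j hj)),
    ges_mul_ges_sep _ _ (fun i hi j hj => lt_of_lt_of_le
      (Finset.mem_range.mp (hp.2 hi)) (hq.2 j hj))]
  rfl

lemma sep_union_inj (N : ℕ) {S S₀ S' S₀' : Finset ℕ} (hS : S ⊆ Finset.range N)
    (hS₀ : S₀ ⊆ Finset.range N) (hS' : ∀ i ∈ S', N ≤ i) (hS₀' : ∀ i ∈ S₀', N ≤ i)
    (h : S ∪ S' = S₀ ∪ S₀') : S = S₀ ∧ S' = S₀' := by
  constructor <;> ext i <;> constructor <;> intro hi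
  · have : i ∈ S₀ ∪ S₀' := h ▸ Finset.mem_union_left _ hi
    rcases Finset.mem_union.mp this with h1 | h2
    · exact h1
    · have := hS₀' i h2
      have := Finset.mem_range.mp (hS hi)
      omega
  · have : i ∈ S ∪ S' := h ▸ Finset.mem_union_left _ hi
    rcases Finset.mem_union.mp this with h1 | h2
    · exact h1
    · have := hS' i h2
      have := Finset.mem_range.mp (hS₀ hi)
      omega
  · have : i ∈ S₀ ∪ S₀' := h ▸ Finset.mem_union_right _ hi
    rcases Finset.mem_union.mp this with h1 | h2
    · have := Finset.mem_range.mp (hS₀ h1)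
      have := hS' i hi
      omega
    · exact h2
  · have : i ∈ S ∪ S' := h ▸ Finset.mem_union_right _ hi
    rcases Finset.mem_union.mp this with h1 | h2
    · have := Finset.mem_range.mp (hS h1)
      have := hS₀' i hi
      omega
    · exact h2

/-- KEY: products of nonzero elements with separated supports are nonzero. -/
lemma mul_ne_zero_sep (N : ℕ) {x y : GA F} (hx : x ∈ BN (F := F) N) (hy : y ∈ CN (F := F) N)
    (hx0 : x ≠ 0) (hy0 : y ≠ 0) : x * y ≠ 0 := by
  rw [BN, Finsupp.mem_span_image_iff_linearCombination] at hx
  rw [CN, Finsupp.mem_span_image_iff_linearCombination] at hy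
  obtain ⟨c, hcsupp, rfl⟩ := hx
  obtain ⟨d, hdsupp, rfl⟩ := hy
  have hcne : c.support.Nonempty := by
    rw [Finsupp.support_nonempty_iff]
    rintro rfl
    exact hx0 (by simp)
  have hdne : d.support.Nonempty := by
    rw [Finsupp.support_nonempty_iff]
    rintro rfl
    exact hy0 (by simp)
  obtain ⟨p0, hp0⟩ := hcne
  obtain ⟨q0, hq0⟩ := hdne
  rw [Finsupp.linearCombination_apply, Finsupp.linearCombination_apply, Finsupp.sum, Finsupp.sum]
  intro hzero
  have hexp : ∀ p ∈ c.support, ∀ q ∈ d.support,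
      (c p • gm p : GA F) * (d q • gm q) = (c p * d q) • gm (p.1 ∪ q.1, p.2 ∪ q.2) := by
    intro p hp q hq
    rw [smul_mul_smul_comm, gm_mul_gm_sep N p q (hcsupp hp) (hdsupp hq)]
  rw [Finset.sum_mul_sum] at hzero
  have happ := congrArg (gL (p0.1 ∪ q0.1, p0.2 ∪ q0.2)) hzero
  rw [map_sum, map_zero] at happ
  have hsingle : ∀ p ∈ c.support,
      (gL (p0.1 ∪ q0.1, p0.2 ∪ q0.2)) (∑ q ∈ d.support, (c p • gm p : GA F) * (d q • gm q))
        = if p = p0 then (c p0 * d q0) * gL (p0.1 ∪ q0.1, p0.2 ∪ q0.2)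
            (gm (p0.1 ∪ q0.1, p0.2 ∪ q0.2)) else 0 := by
    intro p hp
    rw [map_sum]
    have hterm : ∀ q ∈ d.support,
        (gL (p0.1 ∪ q0.1, p0.2 ∪ q0.2)) ((c p • gm p : GA F) * (d q • gm q))
          = if p = p0 ∧ q = q0 then (c p0 * d q0) * gL (p0.1 ∪ q0.1, p0.2 ∪ q0.2)
              (gm (p0.1 ∪ q0.1, p0.2 ∪ q0.2)) else 0 := by
      intro q hq
      rw [hexp p hp q hq, map_smul, smul_eq_mul]
      by_cases heq : (p.1 ∪ q.1, p.2 ∪ q.2) = (p0.1 ∪ q0.1, p0.2 ∪ q0.2)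
      · have h1 := sep_union_inj N (hcsupp hp).1 (hcsupp hp0).1 (hdsupp hq).1 (hdsupp hq0).1
          (congrArg Prod.fst heq)
        have h2 := sep_union_inj N (hcsupp hp).2 (hcsupp hp0).2 (hdsupp hq).2 (hdsupp hq0).2
          (congrArg Prod.snd heq)
        have hpp : p = p0 := Prod.ext h1.1 h2.1
        have hqq : q = q0 := Prod.ext h1.2 h2.2
        rw [if_pos ⟨hpp, hqq⟩, hpp, hqq]
      · rw [gL_gm_ne _ _ heq]
        rw [if_neg, mul_zero]
        rintro ⟨rfl, rfl⟩
        exact heq rfl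
    rw [Finset.sum_congr rfl hterm]
    by_cases hpp : p = p0
    · rw [if_pos hpp]
      have : ∀ q ∈ d.support, (if p = p0 ∧ q = q0 then (c p0 * d q0) * gL (p0.1 ∪ q0.1, p0.2 ∪ q0.2)
          (gm (p0.1 ∪ q0.1, p0.2 ∪ q0.2)) else 0)
          = if q = q0 then (c p0 * d q0) * gL (p0.1 ∪ q0.1, p0.2 ∪ q0.2)
            (gm (p0.1 ∪ q0.1, p0.2 ∪ q0.2)) else 0 := by
        intro q _
        by_cases hqq : q = q0 <;> simp [hqq, hpp]
      rw [Finset.sum_congr rfl this, Finset.sum_ite_eq' d.support q0, if_pos hq0]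
    · rw [if_neg hpp]
      apply Finset.sum_eq_zero
      intro q _
      rw [if_neg (fun hand => hpp hand.1)]
  rw [Finset.sum_congr rfl hsingle, Finset.sum_ite_eq' c.support p0, if_pos hp0] at happ
  exact (mul_ne_zero (mul_ne_zero (Finsupp.mem_support_iff.mp hp0)
    (Finsupp.mem_support_iff.mp hq0)) (gL_gm_self _)) happ

end Chunk5

section Chunk6
set_option linter.unusedSectionVars false
variable {F : Type*} [Field F] [CharZero F]

/-- grade involution on one Grassmann factor -/
noncomputable def ginv : GE F →ₐ[F] GE F := CliffordAlgebra.involute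

@[simp] lemma ginv_gth (k : ℕ) : ginv (gth k : GE F) = -gth k :=
  CliffordAlgebra.involute_ι _

lemma ginv_gw (l : List ℕ) : ginv (gw l : GE F) = ((-1 : F) ^ l.length) • gw l := by
  induction l with
  | nil => simp
  | cons k l ih =>
    rw [gw_cons, map_mul, ginv_gth, ih, neg_mul, mul_smul_comm, List.length_cons, pow_succ,
      mul_comm _ (-1 : F), mul_smul, neg_one_smul]

lemma ginv_ges (S : Finset ℕ) : ginv (ges S : GE F) = ((-1 : F) ^ S.card) • ges S := by
  rw [ges, ginv_gw, Finset.length_sort]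

/-- first-factor grade involution on `GA` -/
noncomputable def gsg : GA F →ₐ[F] GA F :=
  Algebra.TensorProduct.map ginv (AlgHom.id F (GE F))

/-- second-factor grade involution on `GA` -/
noncomputable def gtau : GA F →ₐ[F] GA F :=
  Algebra.TensorProduct.map (AlgHom.id F (GE F)) ginv

lemma gsg_gm (p : Finset ℕ × Finset ℕ) :
    gsg (gm p : GA F) = ((-1 : F) ^ p.1.card) • gm p := by
  simp only [gm, gsg, Algebra.TensorProduct.map_tmul, ginv_ges, AlgHom.coe_id, id_eq,
    TensorProduct.smul_tmul']

lemma gtau_gm (p : Finset ℕ × Finset ℕ) :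
    gtau (gm p : GA F) = ((-1 : F) ^ p.2.card) • gm p := by
  simp only [gm, gtau, Algebra.TensorProduct.map_tmul, ginv_ges, AlgHom.coe_id, id_eq,
    TensorProduct.tmul_smul]

/-- extensionality on the monomial spanning family -/
lemma linearMap_ext_gm {f g : GA F →ₗ[F] GA F} (h : ∀ p, f (gm p) = g (gm p)) : f = g := by
  apply LinearMap.ext_on (span_gm_top (F := F))
  rintro x ⟨p, rfl⟩
  exact h p

variable (F) in
/-- sign of a boolean -/
def sgB (b : Bool) : F := if b then -1 else 1

/-- parity of a finset -/
def parB (S : Finset ℕ) : Bool := decide (Odd S.card)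

lemma neg_one_pow_card (S : Finset ℕ) : ((-1 : F) ^ S.card) = sgB F (parB S) := by
  by_cases h : Odd S.card
  · rw [h.neg_one_pow]; simp [sgB, parB, h]
  · rw [(Nat.not_odd_iff_even.mp h).neg_one_pow]; simp [sgB, parB, h]

lemma sgB_sq (b : Bool) : (sgB F b) * sgB F b = 1 := by cases b <;> simp [sgB]

lemma sgB_ne_zero (b : Bool) : (sgB F b) ≠ 0 := by cases b <;> simp [sgB]

variable (F) in
/-- the projection onto the `(u.1, u.2)`-component -/
noncomputable def gP (u : Bool × Bool) : GA F →ₗ[F] GA F :=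
  (4 : F)⁻¹ • (LinearMap.id + sgB F u.1 • (gsg (F := F)).toLinearMap
    + sgB F u.2 • (gtau (F := F)).toLinearMap
    + (sgB F u.1 * sgB F u.2) • ((gsg (F := F)).toLinearMap ∘ₗ (gtau (F := F)).toLinearMap))

lemma gP_apply (u : Bool × Bool) (x : GA F) :
    gP F u x = (4 : F)⁻¹ • (x + sgB F u.1 • gsg x + sgB F u.2 • gtau x
      + (sgB F u.1 * sgB F u.2) • gsg (gtau x)) := by
  simp [gP, LinearMap.add_apply, LinearMap.smul_apply]

lemma gP_gm (u : Bool × Bool) (p : Finset ℕ × Finset ℕ) :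
    gP F u (gm p : GA F) = if (parB p.1, parB p.2) = u then gm p else 0 := by
  have htau : gsg (gtau (gm p : GA F)) = (sgB F (parB p.1) * sgB F (parB p.2)) • gm p := by
    rw [gtau_gm, map_smul, gsg_gm, neg_one_pow_card, neg_one_pow_card, smul_smul,
      mul_comm]
  rw [gP_apply, htau, gsg_gm, gtau_gm, neg_one_pow_card, neg_one_pow_card]
  rw [smul_smul, smul_smul, smul_smul]
  have hcoe : (gm p : GA F) + (sgB F u.1 * sgB F (parB p.1)) • gm p
      + (sgB F u.2 * sgB F (parB p.2)) • gm p
      + (sgB F u.1 * sgB F u.2 * (sgB F (parB p.1) * sgB F (parB p.2))) • gm p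
      = ((1 + sgB F u.1 * sgB F (parB p.1)) * (1 + sgB F u.2 * sgB F (parB p.2))) • gm p := by
    module
  rw [hcoe, smul_smul]
  by_cases h1 : parB p.1 = u.1
  · by_cases h2 : parB p.2 = u.2
    · rw [if_pos (by rw [h1, h2])]
      rw [h1, h2, mul_comm (sgB F u.1), sgB_sq, mul_comm (sgB F u.2), sgB_sq]
      norm_num
    · rw [if_neg (fun hc => h2 (by rw [← hc]))]
      have hz : (1 : F) + sgB F u.2 * sgB F (parB p.2) = 0 := by
        cases hu : u.2 <;> cases hp : parB p.2 <;> simp_all [sgB] <;> norm_num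
      rw [hz, mul_zero, mul_zero, zero_smul]
  · rw [if_neg (fun hc => h1 (by rw [← hc]))]
    have hz : (1 : F) + sgB F u.1 * sgB F (parB p.1) = 0 := by
      cases hu : u.1 <;> cases hp : parB p.1 <;> simp_all [sgB] <;> norm_num
    rw [hz, zero_mul, mul_zero, zero_smul]

/-- homogeneous elements -/
def IsHomog (u : Bool × Bool) (x : GA F) : Prop :=
  gsg x = sgB F u.1 • x ∧ gtau x = sgB F u.2 • x

lemma isHomog_zero (u : Bool × Bool) : IsHomog u (0 : GA F) := by simp [IsHomog]

lemma isHomog_sub {u : Bool × Bool} {x y : GA F} (hx : IsHomog u x) (hy : IsHomog u y) :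
    IsHomog u (x - y) := by
  constructor
  · rw [map_sub, smul_sub, hx.1, hy.1]
  · rw [map_sub, smul_sub, hx.2, hy.2]

lemma isHomog_smul {u : Bool × Bool} {x : GA F} (c : F) (hx : IsHomog u x) :
    IsHomog u (c • x) := by
  constructor
  · rw [map_smul, hx.1, smul_comm]
  · rw [map_smul, hx.2, smul_comm]

lemma isHomog_mul {u v : Bool × Bool} {x y : GA F} (hx : IsHomog u x) (hy : IsHomog v y) :
    IsHomog (xor u.1 v.1, xor u.2 v.2) (x * y) := by
  have hsg : ∀ a b : Bool, (sgB F (xor a b)) = sgB F a * sgB F b := by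
    intro a b; cases a <;> cases b <;> simp [sgB]
  constructor
  · rw [map_mul, hx.1, hy.1, smul_mul_smul_comm, hsg]
  · rw [map_mul, hx.2, hy.2, smul_mul_smul_comm, hsg]

lemma gsg_comp_gP (u : Bool × Bool) :
    (gsg (F := F)).toLinearMap ∘ₗ gP F u = sgB F u.1 • gP F u := by
  apply linearMap_ext_gm
  intro p
  rw [LinearMap.comp_apply, LinearMap.smul_apply, AlgHom.toLinearMap_apply, gP_gm]
  by_cases h : (parB p.1, parB p.2) = u
  · rw [if_pos h, gsg_gm, neg_one_pow_card]
    have : parB p.1 = u.1 := by rw [← h]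
    rw [this]
  · rw [if_neg h, map_zero, smul_zero]

lemma gtau_comp_gP (u : Bool × Bool) :
    (gtau (F := F)).toLinearMap ∘ₗ gP F u = sgB F u.2 • gP F u := by
  apply linearMap_ext_gm
  intro p
  rw [LinearMap.comp_apply, LinearMap.smul_apply, AlgHom.toLinearMap_apply, gP_gm]
  by_cases h : (parB p.1, parB p.2) = u
  · rw [if_pos h, gtau_gm, neg_one_pow_card]
    have : parB p.2 = u.2 := by rw [← h]
    rw [this]
  · rw [if_neg h, map_zero, smul_zero]

lemma isHomog_gP (u : Bool × Bool) (x : GA F) : IsHomog u (gP F u x) := by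
  constructor
  · have := congrArg (fun f => f x) (gsg_comp_gP (F := F) u)
    simpa using this
  · have := congrArg (fun f => f x) (gtau_comp_gP (F := F) u)
    simpa using this

lemma gP_of_isHomog {u : Bool × Bool} {x : GA F} (hx : IsHomog u x) : gP F u x = x := by
  have htau : gsg (gtau x) = (sgB F u.1 * sgB F u.2) • x := by
    rw [hx.2, map_smul, hx.1, smul_smul, mul_comm]
  rw [gP_apply, htau, hx.1, hx.2, smul_smul, smul_smul, smul_smul, mul_comm (sgB F u.1),
    sgB_sq, sgB_sq]
  have : (sgB F u.1 * sgB F u.2 * (sgB F u.1 * sgB F u.2)) = 1 := by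
    cases hu : u.1 <;> cases hv : u.2 <;> simp [sgB] <;> norm_num
  rw [this, one_smul]
  have h4 : (x : GA F) + x + x + x = (4 : F) • x := by
    rw [show (4 : F) = 1 + 1 + 1 + 1 by norm_num]
    rw [add_smul, add_smul, add_smul, one_smul]
  rw [h4, smul_smul, inv_mul_cancel₀ (by norm_num : (4 : F) ≠ 0), one_smul]

lemma isHomog_eq_zero {u v : Bool × Bool} {x : GA F} (hu : IsHomog u x) (hv : IsHomog v x)
    (huv : u ≠ v) : x = 0 := by
  have key : ∀ a b : Bool, a ≠ b → (sgB F a) • x = (sgB F b) • x → x = 0 := by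
    intro a b hab h
    have hz : ((sgB F a) - sgB F b) • x = 0 := by rw [sub_smul, h, sub_self]
    have hne : (sgB F a) - sgB F b ≠ 0 := by
      cases a <;> cases b
      · exact absurd rfl hab
      · norm_num [sgB]
      · norm_num [sgB]
      · exact absurd rfl hab
    calc x = (((sgB F a) - sgB F b)⁻¹ * ((sgB F a) - sgB F b)) • x := by
            rw [inv_mul_cancel₀ hne, one_smul]
      _ = ((sgB F a) - sgB F b)⁻¹ • (((sgB F a) - sgB F b) • x) := mul_smul _ _ _
      _ = 0 := by rw [hz, smul_zero]
  by_cases h1 : u.1 = v.1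
  · have h2 : u.2 ≠ v.2 := fun h2 => huv (Prod.ext h1 h2)
    exact key u.2 v.2 h2 (by rw [← hu.2, ← hv.2])
  · exact key u.1 v.1 h1 (by rw [← hu.1, ← hv.1])

lemma gP_sum (x : GA F) :
    gP F (false, false) x + gP F (false, true) x + gP F (true, false) x + gP F (true, true) x
      = x := by
  have : gP F (false, false) + gP F (false, true) + gP F (true, false) + gP F (true, true)
      = (LinearMap.id : GA F →ₗ[F] GA F) := by
    apply linearMap_ext_gm
    intro p
    rw [LinearMap.add_apply, LinearMap.add_apply, LinearMap.add_apply, LinearMap.id_apply,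
      gP_gm, gP_gm, gP_gm, gP_gm]
    cases h1 : parB p.1 <;> cases h2 : parB p.2 <;> simp
  have := congrArg (fun f => f x) this
  simpa using this

end Chunk6

section Chunk6b
set_option linter.unusedSectionVars false
variable {F : Type*} [Field F] [CharZero F]

/-- the element `θ_k ⊗ 1` -/
noncomputable def ga1 (k : ℕ) : GA F := gm ({k}, ∅)
/-- the element `1 ⊗ θ_k` -/
noncomputable def ga2 (k : ℕ) : GA F := gm (∅, {k})

lemma ga1_mul_gm (k : ℕ) (p : Finset ℕ × Finset ℕ) :
    (ga1 k : GA F) * gm p = ((-1 : F) ^ p.1.card) • (gm p * ga1 k) := by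
  simp only [ga1, gm, Algebra.TensorProduct.tmul_mul_tmul, ges_singleton, ges_empty, one_mul,
    mul_one]
  rw [show (gth k : GE F) * ges p.1 = ((-1 : F) ^ p.1.card) • (ges p.1 * gth k) by
    rw [ges, gth_mul_gw, Finset.length_sort], TensorProduct.smul_tmul']

lemma ga2_mul_gm (k : ℕ) (p : Finset ℕ × Finset ℕ) :
    (ga2 k : GA F) * gm p = ((-1 : F) ^ p.2.card) • (gm p * ga2 k) := by
  simp only [ga2, gm, Algebra.TensorProduct.tmul_mul_tmul, ges_singleton, ges_empty, one_mul,
    mul_one]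
  rw [show (gth k : GE F) * ges p.2 = ((-1 : F) ^ p.2.card) • (ges p.2 * gth k) by
    rw [ges, gth_mul_gw, Finset.length_sort], TensorProduct.tmul_smul]

lemma parB_neg_pow {S : Finset ℕ} (h : parB S = true) : ((-1 : F) ^ S.card) = -1 := by
  rw [neg_one_pow_card, h]; rfl

lemma parB_pos_pow {S : Finset ℕ} (h : parB S = false) : ((-1 : F) ^ S.card) = 1 := by
  rw [neg_one_pow_card, h]; rfl

lemma ga1_anticomm {u : Bool × Bool} {x : GA F} (hx : IsHomog u x) (hu : u.1 = true) (k : ℕ) :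
    (ga1 k : GA F) * x = -(x * ga1 k) := by
  have hzero : (LinearMap.mulLeft F (ga1 k : GA F) ∘ₗ gP F u)
      + (LinearMap.mulRight F (ga1 k) ∘ₗ gP F u) = 0 := by
    apply linearMap_ext_gm
    intro p
    rw [LinearMap.add_apply, LinearMap.comp_apply, LinearMap.comp_apply, gP_gm,
      LinearMap.zero_apply]
    by_cases h : (parB p.1, parB p.2) = u
    · rw [LinearMap.mulLeft_apply, LinearMap.mulRight_apply, if_pos h, ga1_mul_gm,
        parB_neg_pow (by rw [show parB p.1 = u.1 from congrArg Prod.fst h, hu]),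
        neg_one_smul, neg_add_cancel]
    · simp [h]
  have happ := congrArg (fun f => f x) hzero
  simp only [LinearMap.add_apply, LinearMap.comp_apply, LinearMap.zero_apply,
    gP_of_isHomog hx, LinearMap.mulLeft_apply, LinearMap.mulRight_apply] at happ
  exact eq_neg_of_add_eq_zero_left happ

lemma ga2_anticomm {u : Bool × Bool} {x : GA F} (hx : IsHomog u x) (hu : u.2 = true) (k : ℕ) :
    (ga2 k : GA F) * x = -(x * ga2 k) := by
  have hzero : (LinearMap.mulLeft F (ga2 k : GA F) ∘ₗ gP F u)
      + (LinearMap.mulRight F (ga2 k) ∘ₗ gP F u) = 0 := by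
    apply linearMap_ext_gm
    intro p
    rw [LinearMap.add_apply, LinearMap.comp_apply, LinearMap.comp_apply, gP_gm,
      LinearMap.zero_apply]
    by_cases h : (parB p.1, parB p.2) = u
    · rw [LinearMap.mulLeft_apply, LinearMap.mulRight_apply, if_pos h, ga2_mul_gm,
        parB_neg_pow (by rw [show parB p.2 = u.2 from congrArg Prod.snd h, hu]),
        neg_one_smul, neg_add_cancel]
    · simp [h]
  have happ := congrArg (fun f => f x) hzero
  simp only [LinearMap.add_apply, LinearMap.comp_apply, LinearMap.zero_apply,
    gP_of_isHomog hx, LinearMap.mulLeft_apply, LinearMap.mulRight_apply] at happ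
  exact eq_neg_of_add_eq_zero_left happ

lemma gm_comm_even (q p : Finset ℕ × Finset ℕ) (h1 : parB q.1 = false) (h2 : parB q.2 = false) :
    (gm q : GA F) * gm p = gm p * gm q := by
  have he1 : Even q.1.card := Nat.not_odd_iff_even.mp (by simpa [parB] using h1)
  have he2 : Even q.2.card := Nat.not_odd_iff_even.mp (by simpa [parB] using h2)
  rw [gm_mul_gm, gm_mul_gm]
  rw [show (ges q.1 : GE F) * ges p.1 = ges p.1 * ges q.1 by
    have := gw_mul_gw_comm (F := F) (q.1.sort (· ≤ ·)) (p.1.sort (· ≤ ·))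
    rw [ges, ges, this, Finset.length_sort, Finset.length_sort, (he1.mul_right _).neg_one_pow,
      one_smul]]
  rw [show (ges q.2 : GE F) * ges p.2 = ges p.2 * ges q.2 by
    have := gw_mul_gw_comm (F := F) (q.2.sort (· ≤ ·)) (p.2.sort (· ≤ ·))
    rw [ges, ges, this, Finset.length_sort, Finset.length_sort, (he2.mul_right _).neg_one_pow,
      one_smul]]

lemma isHomog00_central {x : GA F} (hx : IsHomog (false, false) x) (t : GA F) :
    x * t = t * x := by
  have hstep : ∀ p, x * gm p = gm p * x := by
    intro p
    have hmaps : (LinearMap.mulRight F (gm p : GA F) ∘ₗ gP F (false, false))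
        = (LinearMap.mulLeft F (gm p) ∘ₗ gP F (false, false)) := by
      apply linearMap_ext_gm
      intro q
      rw [LinearMap.comp_apply, LinearMap.comp_apply, gP_gm]
      by_cases h : (parB q.1, parB q.2) = (false, false)
      · rw [if_pos h, LinearMap.mulRight_apply, LinearMap.mulLeft_apply,
          gm_comm_even q p (congrArg Prod.fst h) (congrArg Prod.snd h)]
      · rw [if_neg h]; simp
    have happ := congrArg (fun f => f x) hmaps
    simpa [gP_of_isHomog hx] using happ
  have hmaps2 : (LinearMap.mulLeft F x : GA F →ₗ[F] GA F) = LinearMap.mulRight F x := by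
    apply linearMap_ext_gm
    intro p
    rw [LinearMap.mulLeft_apply, LinearMap.mulRight_apply, hstep p]
  have := congrArg (fun f => f t) hmaps2
  simpa using this

/-- shift endomorphism on one factor -/
noncomputable def gshE (N : ℕ) : GE F →ₐ[F] GE F :=
  ExteriorAlgebra.map (Finsupp.lmapDomain F F (· + N))

/-- shift endomorphism on `GA` -/
noncomputable def gsh (N : ℕ) : GA F →ₐ[F] GA F :=
  Algebra.TensorProduct.map (gshE N) (gshE N)

lemma gshE_gth (N k : ℕ) : gshE N (gth k : GE F) = gth (k + N) := by
  rw [gshE, gth, ExteriorAlgebra.map_apply_ι]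
  congr 1
  rw [Finsupp.lmapDomain_apply, Finsupp.mapDomain_single]

lemma gshE_gw (N : ℕ) (l : List ℕ) : gshE N (gw l : GE F) = gw (l.map (· + N)) := by
  induction l with
  | nil => simp
  | cons k l ih => rw [gw_cons, map_mul, gshE_gth, ih, List.map_cons, gw_cons]

lemma sort_image_add (S : Finset ℕ) (N : ℕ) :
    (S.image (· + N)).sort (· ≤ ·) = (S.sort (· ≤ ·)).map (· + N) := by
  apply List.eq_of_perm_of_sorted ?_ (Finset.pairwise_sort _ _)
  · exact List.pairwise_map.mpr ((Finset.pairwise_sort S (· ≤ ·)).imp (by omega))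
  · apply List.perm_of_nodup_nodup_toFinset_eq (Finset.sort_nodup _ _)
    · exact (Finset.sort_nodup _ _).map (fun a b => by omega)
    · ext i
      simp

lemma gshE_ges (N : ℕ) (S : Finset ℕ) :
    gshE N (ges S : GE F) = ges (S.image (· + N)) := by
  rw [ges, gshE_gw, ges, sort_image_add]

lemma gsh_gm (N : ℕ) (p : Finset ℕ × Finset ℕ) :
    gsh N (gm p : GA F) = gm (p.1.image (· + N), p.2.image (· + N)) := by
  rw [gm, gsh, Algebra.TensorProduct.map_tmul, gshE_ges, gshE_ges]; rfl

lemma gsh_mem_CN (N : ℕ) (x : GA F) : gsh N x ∈ CN (F := F) N := by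
  have hx : x ∈ Submodule.span F (Set.range (gm (F := F))) := by rw [span_gm_top]; trivial
  refine Submodule.span_induction ?_ ?_ ?_ ?_ hx
  · rintro y ⟨p, rfl⟩
    rw [gsh_gm]
    refine Submodule.subset_span ⟨_, ⟨?_, ?_⟩, rfl⟩
    · intro i hi
      obtain ⟨j, _, rfl⟩ := Finset.mem_image.mp hi
      omega
    · intro i hi
      obtain ⟨j, _, rfl⟩ := Finset.mem_image.mp hi
      omega
  · rw [map_zero]; exact Submodule.zero_mem _
  · intro a b _ _ ha hb; rw [map_add]; exact Submodule.add_mem _ ha hb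
  · intro c a _ ha; rw [map_smul]; exact Submodule.smul_mem _ _ ha

lemma gunshE_gshE (N : ℕ) (x : GE F) :
    ExteriorAlgebra.map (Finsupp.lmapDomain F F (· - N)) (gshE N x) = x := by
  have hcomp : (ExteriorAlgebra.map (Finsupp.lmapDomain F F (· - N))).comp
      (gshE (F := F) N) = AlgHom.id F (GE F) := by
    rw [gshE, ExteriorAlgebra.map_comp_map]
    have : (Finsupp.lmapDomain F F (· - N)).comp (Finsupp.lmapDomain F F (· + N))
        = LinearMap.id (R := F) (M := GV F) := by
      apply LinearMap.ext
      intro v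
      simp only [LinearMap.comp_apply, Finsupp.lmapDomain_apply, LinearMap.id_apply]
      rw [← Finsupp.mapDomain_comp]
      have hfun : ((· - N) ∘ (· + N) : ℕ → ℕ) = id := by
        funext i; simp
      rw [hfun, Finsupp.mapDomain_id]
    rw [this, ExteriorAlgebra.map_id]
  exact congrArg (fun f => f x) hcomp

lemma gsh_injective (N : ℕ) {x : GA F} (h : gsh N x = 0) : x = 0 := by
  have hlin : (Algebra.TensorProduct.map
        (ExteriorAlgebra.map (Finsupp.lmapDomain F F (· - N)))
        (ExteriorAlgebra.map (Finsupp.lmapDomain F F (· - N)))).toLinearMap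
      ∘ₗ (gsh (F := F) N).toLinearMap = LinearMap.id := by
    apply linearMap_ext_gm
    intro p
    rw [LinearMap.comp_apply, LinearMap.id_apply, AlgHom.toLinearMap_apply,
      AlgHom.toLinearMap_apply, gm, gsh, Algebra.TensorProduct.map_tmul,
      Algebra.TensorProduct.map_tmul]
    rw [show (gshE N : GE F →ₐ[F] GE F) (ges p.1) = gshE N (ges p.1) from rfl]
    rw [gunshE_gshE, gunshE_gshE]
  have := congrArg (fun f => f x) hlin
  simp only [LinearMap.comp_apply, AlgHom.toLinearMap_apply, LinearMap.id_apply, h,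
    map_zero] at this
  exact this.symm

lemma gsh_comm_gsg (N : ℕ) (x : GA F) : gsg (gsh N x) = gsh N (gsg x) := by
  have hlin : (gsg (F := F)).toLinearMap ∘ₗ (gsh (F := F) N).toLinearMap
      = (gsh (F := F) N).toLinearMap ∘ₗ (gsg (F := F)).toLinearMap := by
    apply linearMap_ext_gm
    intro p
    simp only [LinearMap.comp_apply, AlgHom.toLinearMap_apply]
    rw [gsh_gm, gsg_gm, gsg_gm, map_smul, gsh_gm]
    congr 1
    rw [Finset.card_image_of_injective _ (fun a b => by omega)]
  exact congrArg (fun f => f x) hlin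

lemma gsh_comm_gtau (N : ℕ) (x : GA F) : gtau (gsh N x) = gsh N (gtau x) := by
  have hlin : (gtau (F := F)).toLinearMap ∘ₗ (gsh (F := F) N).toLinearMap
      = (gsh (F := F) N).toLinearMap ∘ₗ (gtau (F := F)).toLinearMap := by
    apply linearMap_ext_gm
    intro p
    simp only [LinearMap.comp_apply, AlgHom.toLinearMap_apply]
    rw [gsh_gm, gtau_gm, gtau_gm, map_smul, gsh_gm]
    congr 1
    rw [Finset.card_image_of_injective _ (fun a b => by omega)]
  exact congrArg (fun f => f x) hlin

lemma gsh_isHomog {u : Bool × Bool} {x : GA F} (hx : IsHomog u x) (N : ℕ) :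
    IsHomog u (gsh N x) := by
  constructor
  · rw [gsh_comm_gsg, hx.1, map_smul]
  · rw [gsh_comm_gtau, hx.2, map_smul]

/-- conjugation by `1 + a` for square-zero `a` -/
noncomputable def gcj (a : GA F) (ha : a * a = 0) : GA F →ₐ[F] GA F where
  toFun x := (1 + a) * x * (1 - a)
  map_one' := by
    show (1 + a) * 1 * (1 - a) = 1
    rw [mul_one, mul_sub, mul_one, add_mul, one_mul, ha, add_zero, add_sub_cancel_right]
  map_mul' x y := by
    show (1 + a) * (x * y) * (1 - a) = ((1 + a) * x * (1 - a)) * ((1 + a) * y * (1 - a))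
    have h2 : (1 - a) * (1 + a) = 1 := by
      rw [sub_mul, one_mul, mul_add, mul_one, ha, add_zero, add_sub_cancel_right]
    calc (1 + a) * (x * y) * (1 - a)
        = (1 + a) * (x * (1 * y)) * (1 - a) := by rw [one_mul]
      _ = (1 + a) * (x * (((1 - a) * (1 + a)) * y)) * (1 - a) := by rw [h2]
      _ = ((1 + a) * x * (1 - a)) * ((1 + a) * y * (1 - a)) := by
          simp only [mul_assoc]
  map_zero' := by
    show (1 + a) * 0 * (1 - a) = 0
    rw [mul_zero, zero_mul]
  map_add' x y := by
    show (1 + a) * (x + y) * (1 - a) = (1 + a) * x * (1 - a) + (1 + a) * y * (1 - a)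
    rw [mul_add, add_mul]
  commutes' r := by
    show (1 + a) * algebraMap F (GA F) r * (1 - a) = algebraMap F (GA F) r
    rw [← Algebra.commutes r (1 + a), mul_assoc, show ((1 : GA F) + a) * (1 - a) = 1 by
        rw [mul_sub, mul_one, add_mul, one_mul, ha, add_zero, add_sub_cancel_right], mul_one]

lemma gcj_apply (a : GA F) (ha : a * a = 0) (x : GA F) :
    gcj a ha x = (1 + a) * x * (1 - a) := rfl

instance : Nontrivial (GA F) := by
  refine ⟨1, 0, fun h => gL_gm_self (F := F) (∅, ∅) ?_⟩
  rw [show (gm (∅, ∅) : GA F) = 1 by simp [gm, Algebra.TensorProduct.one_def], h, map_zero]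

end Chunk6b

section Chunk7
set_option linter.unusedSectionVars false
variable {F : Type*} [Field F] [CharZero F]

/-- the center as a submodule -/
noncomputable def centSub : Submodule F (GA F) where
  carrier := {z | ∀ t, z * t = t * z}
  add_mem' := by intro a b ha hb t; rw [add_mul, mul_add, ha t, hb t]
  zero_mem' := by intro t; rw [zero_mul, mul_zero]
  smul_mem' := by intro c z hz t; rw [smul_mul_assoc, mul_smul_comm, hz t]

lemma smul_cancel_ne {c : F} (hc : c ≠ 0) {z : GA F} (h : c • z = 0) : z = 0 := by
  calc z = (c⁻¹ * c) • z := by rw [inv_mul_cancel₀ hc, one_smul]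
    _ = c⁻¹ • (c • z) := mul_smul _ _ _
    _ = 0 := by rw [h, smul_zero]

lemma gm_ne_zero (p : Finset ℕ × Finset ℕ) : (gm p : GA F) ≠ 0 :=
  fun h => gL_gm_self p (by rw [h, map_zero])

lemma centr_homog_zero {u : Bool × Bool} {w : GA F} (hu : u ≠ (false, false))
    (hhom : IsHomog u w) (hc : ∀ t, w * t = t * w) : w = 0 := by
  by_contra hw
  obtain ⟨N, hN⟩ := exists_BN w
  have key : ∀ (a : GA F), a * w = -(w * a) → w * a ≠ 0 → False := by
    intro a hac hnz
    have h1 : w * a = -(w * a) := (hc a).trans hac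
    have h2 : (2 : F) • (w * a) = 0 := by
      rw [two_smul]
      nth_rewrite 1 [h1]
      exact neg_add_cancel _
    exact hnz (smul_cancel_ne (by norm_num) h2)
  cases hu1 : u.1 with
  | true =>
    have hmem : (ga1 N : GA F) ∈ CN (F := F) N :=
      Submodule.subset_span ⟨({N}, ∅), ⟨fun i hi => le_of_eq (Finset.mem_singleton.mp hi).symm,
        fun i hi => absurd hi (Finset.notMem_empty i)⟩, rfl⟩
    exact key (ga1 N) (ga1_anticomm hhom hu1 N)
      (mul_ne_zero_sep N hN hmem hw (gm_ne_zero _))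
  | false =>
    have hu2 : u.2 = true := by
      cases h2 : u.2
      · exact absurd (Prod.ext hu1 h2) hu
      · rfl
    have hmem : (ga2 N : GA F) ∈ CN (F := F) N :=
      Submodule.subset_span ⟨(∅, {N}), ⟨fun i hi => absurd hi (Finset.notMem_empty i),
        fun i hi => le_of_eq (Finset.mem_singleton.mp hi).symm⟩, rfl⟩
    exact key (ga2 N) (ga2_anticomm hhom hu2 N)
      (mul_ne_zero_sep N hN hmem hw (gm_ne_zero _))

lemma isHomog_ga1 (k : ℕ) : IsHomog (true, false) (ga1 k : GA F) := by
  constructor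
  · rw [ga1, gsg_gm]
    simp [sgB]
  · rw [ga1, gtau_gm]
    simp [sgB]

lemma isHomog_ga2 (k : ℕ) : IsHomog (false, true) (ga2 k : GA F) := by
  constructor
  · rw [ga2, gsg_gm]
    simp [sgB]
  · rw [ga2, gtau_gm]
    simp [sgB]

lemma gP_comm_gsh (v : Bool × Bool) (N : ℕ) (y : GA F) :
    gP F v (gsh N y) = gsh N (gP F v y) := by
  rw [gP_apply, gP_apply]
  simp only [map_add, map_smul, gsh_comm_gsg, gsh_comm_gtau]

lemma ga1_sq (k : ℕ) : (ga1 k : GA F) * ga1 k = 0 := by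
  simp only [ga1, gm, Algebra.TensorProduct.tmul_mul_tmul, ges_singleton, gth_sq,
    TensorProduct.zero_tmul]

lemma ga2_sq (k : ℕ) : (ga2 k : GA F) * ga2 k = 0 := by
  simp only [ga2, gm, Algebra.TensorProduct.tmul_mul_tmul, ges_singleton, gth_sq,
    TensorProduct.tmul_zero]

lemma ga1_mem_BN : (ga1 0 : GA F) ∈ BN (F := F) 1 := by
  refine Submodule.subset_span ⟨({0}, ∅), ⟨fun i hi => ?_, fun i hi => ?_⟩, rfl⟩
  · simp only [Finset.mem_singleton] at hi
    simp [hi]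
  · exact absurd hi (Finset.notMem_empty i)

lemma ga2_mem_BN : (ga2 0 : GA F) ∈ BN (F := F) 1 := by
  refine Submodule.subset_span ⟨(∅, {0}), ⟨fun i hi => ?_, fun i hi => ?_⟩, rfl⟩
  · exact absurd hi (Finset.notMem_empty i)
  · simp only [Finset.mem_singleton] at hi
    simp [hi]

set_option maxHeartbeats 2000000 in
open scoped Pointwise in
theorem core_theorem (X Y : Set (GA F))
    (hXc : ∀ (φ : GA F →ₐ[F] GA F), ∀ x ∈ X, φ x ∈ X)
    (hYc : ∀ (φ : GA F →ₐ[F] GA F), ∀ y ∈ Y, φ y ∈ Y)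
    (hZ : ∀ x ∈ X, ∀ y ∈ Y, ∀ t, (x * y) * t = t * (x * y))
    (hne : ∃ x ∈ X, ∃ y ∈ Y, x * y ≠ 0) :
    (∀ x ∈ X, ∀ t, x * t = t * x) ∧ (∀ y ∈ Y, ∀ t, y * t = t * y) := by
  -- projections of elements stay in the linear span
  have hPmem : ∀ (W : Set (GA F)), (∀ (φ : GA F →ₐ[F] GA F), ∀ x ∈ W, φ x ∈ W) →
      ∀ u, ∀ x ∈ W, gP F u x ∈ Submodule.span F W := by
    intro W hWc u x hx
    rw [gP_apply]
    refine Submodule.smul_mem _ _ (Submodule.add_mem _ (Submodule.add_mem _ (Submodule.add_mem _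
      (Submodule.subset_span hx) ?_) ?_) ?_)
    · exact Submodule.smul_mem _ _ (Submodule.subset_span (hWc gsg x hx))
    · exact Submodule.smul_mem _ _ (Submodule.subset_span (hWc gtau x hx))
    · exact Submodule.smul_mem _ _ (Submodule.subset_span (hWc (gsg.comp gtau) x hx))
  -- products of projections are central
  have hcentr : ∀ u v, ∀ x ∈ X, ∀ y ∈ Y, ∀ t,
      (gP F u x * gP F v y) * t = t * (gP F u x * gP F v y) := by
    intro u v x hx y hy
    have hmul : gP F u x * gP F v y ∈ Submodule.span F X * Submodule.span F Y :=
      Submodule.mul_mem_mul (hPmem X hXc u x hx) (hPmem Y hYc v y hy)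
    rw [Submodule.span_mul_span] at hmul
    have hle : Submodule.span F (X * Y) ≤ centSub (F := F) := by
      rw [Submodule.span_le]
      rintro w ⟨x', hx', y', hy', rfl⟩
      exact hZ x' hx' y' hy'
    exact hle hmul
  -- cross projections vanish
  have hcross : ∀ u v, u ≠ v → ∀ x ∈ X, ∀ y ∈ Y, gP F u x * gP F v y = 0 := by
    intro u v huv x hx y hy
    have hxor : (xor u.1 v.1, xor u.2 v.2) ≠ (false, false) := by
      intro hcon
      apply huv
      have h1 := congrArg Prod.fst hcon
      have h2 := congrArg Prod.snd hcon
      simp only at h1 h2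
      exact Prod.ext (by revert h1; cases u.1 <;> cases v.1 <;> simp)
        (by revert h2; cases u.2 <;> cases v.2 <;> simp)
    exact centr_homog_zero hxor (isHomog_mul (isHomog_gP u x) (isHomog_gP v y))
      (hcentr u v x hx y hy)
  -- separation: a nonzero projection on one side kills others on the other side
  have hsep : ∀ u v, u ≠ v → ∀ x ∈ X, ∀ y ∈ Y, gP F u x ≠ 0 → gP F v y = 0 := by
    intro u v huv x hx y hy hPx
    by_contra hPy
    obtain ⟨N, hN⟩ := exists_BN (gP F u x)
    have hy' : gsh N y ∈ Y := hYc (gsh N) y hy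
    have hPy' : gP F v (gsh N y) = gsh N (gP F v y) := gP_comm_gsh v N y
    have hPy'ne : gP F v (gsh N y) ≠ 0 := by
      rw [hPy']
      intro hcon
      exact hPy (gsh_injective N hcon)
    have hPy'mem : gP F v (gsh N y) ∈ CN (F := F) N := by
      rw [hPy']
      exact gsh_mem_CN N _
    exact (mul_ne_zero_sep N hN hPy'mem hPx hPy'ne) (hcross u v huv x hx _ hy')
  obtain ⟨x₀, hx₀, y₀, hy₀, hxy₀⟩ := hne
  -- find the common component
  have hdiag : ∃ u, gP F u x₀ ≠ 0 ∧ gP F u y₀ ≠ 0 := by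
    by_contra hcon
    push_neg at hcon
    have hall : ∀ u v, gP F u x₀ * gP F v y₀ = 0 := by
      intro u v
      by_cases huv : u = v
      · subst huv
        by_cases hu : gP F u x₀ = 0
        · rw [hu, zero_mul]
        · rw [hcon u hu, mul_zero]
      · exact hcross u v huv x₀ hx₀ y₀ hy₀
    apply hxy₀
    rw [← gP_sum (F := F) x₀, ← gP_sum (F := F) y₀]
    simp only [add_mul, mul_add, hall]
    simp
  obtain ⟨u, hux, huy⟩ := hdiag
  -- all elements are homogeneous of degree u
  have hhomog : ∀ (W : Set (GA F)), (∀ z ∈ W, ∀ v, v ≠ u → gP F v z = 0) →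
      ∀ z ∈ W, IsHomog u z := by
    intro W hW z hz
    have hzsum := gP_sum (F := F) z
    have hz' : z = gP F u z := by
      rcases u with ⟨(_|_), (_|_)⟩
      · rw [hW z hz (false, true) (by simp), hW z hz (true, false) (by simp),
          hW z hz (true, true) (by simp)] at hzsum
        simpa using hzsum.symm
      · rw [hW z hz (false, false) (by simp), hW z hz (true, false) (by simp),
          hW z hz (true, true) (by simp)] at hzsum
        simpa using hzsum.symm
      · rw [hW z hz (false, false) (by simp), hW z hz (false, true) (by simp),
          hW z hz (true, true) (by simp)] at hzsum
        simpa using hzsum.symm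
      · rw [hW z hz (false, false) (by simp), hW z hz (false, true) (by simp),
          hW z hz (true, false) (by simp)] at hzsum
        simpa using hzsum.symm
    rw [hz']
    exact isHomog_gP u z
  have hXhom : ∀ z ∈ X, IsHomog u z := by
    refine hhomog X (fun z hz v hv => ?_)
    by_contra hPz
    exact huy (hsep v u hv z hz y₀ hy₀ hPz)
  have hYhom : ∀ z ∈ Y, IsHomog u z := by
    refine hhomog Y (fun z hz v hv => ?_)
    exact hsep u v (fun h => hv h.symm) x₀ hx₀ z hz hux
  -- case split on u
  by_cases hu0 : u = (false, false)
  · subst hu0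
    exact ⟨fun x hx t => isHomog00_central (hXhom x hx) t,
      fun y hy t => isHomog00_central (hYhom y hy) t⟩
  · -- the contradiction case
    exfalso
    obtain ⟨a, gu, ha2, hga, hgu0, hanti, haBN, hane⟩ : ∃ (a : GA F) (gu : Bool × Bool),
        a * a = 0 ∧ IsHomog gu a ∧ gu ≠ (false, false) ∧
        (∀ z : GA F, IsHomog u z → a * z = -(z * a)) ∧ a ∈ BN (F := F) 1 ∧ a ≠ 0 := by
      cases hu1 : u.1 with
      | true =>
        exact ⟨ga1 0, (true, false), ga1_sq 0, isHomog_ga1 0, by simp,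
          fun z hz => ga1_anticomm hz hu1 0, ga1_mem_BN, gm_ne_zero _⟩
      | false =>
        have hu2 : u.2 = true := by
          cases h2 : u.2
          · exact absurd (Prod.ext hu1 h2) hu0
          · rfl
        exact ⟨ga2 0, (false, true), ga2_sq 0, isHomog_ga2 0, by simp,
          fun z hz => ga2_anticomm hz hu2 0, ga2_mem_BN, gm_ne_zero _⟩
    -- a annihilates all of X
    have hax : ∀ x ∈ X, a * x = 0 := by
      intro x hx
      have hhx := hXhom x hx
      have hxa : x * a = -(a * x) := by rw [hanti x hhx, neg_neg]
      have h1 : a * x * a = 0 := by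
        rw [mul_assoc, hxa, mul_neg, ← mul_assoc, ha2, zero_mul, neg_zero]
      have hcjval : gcj a ha2 x = x + (2 : F) • (a * x) := by
        rw [gcj_apply]
        calc (1 + a) * x * (1 - a) = (x + a * x) * (1 - a) := by rw [add_mul, one_mul]
          _ = (x - x * a) + (a * x - a * x * a) := by
              rw [add_mul, mul_sub, mul_sub, mul_one, mul_one]
          _ = x + (a * x + a * x) := by rw [h1, sub_zero, hxa]; abel
          _ = x + (2 : F) • (a * x) := by rw [two_smul]
      have hhcj : IsHomog u (gcj a ha2 x) := hXhom _ (hXc (gcj a ha2) x hx)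
      have h2ax : IsHomog u ((2 : F) • (a * x)) := by
        have hsub := isHomog_sub hhcj hhx
        rwa [hcjval, add_sub_cancel_left] at hsub
      have hprod : IsHomog (xor gu.1 u.1, xor gu.2 u.2) ((2 : F) • (a * x)) :=
        isHomog_smul _ (isHomog_mul hga hhx)
      have hneq : (xor gu.1 u.1, xor gu.2 u.2) ≠ u := by
        intro hcon
        apply hgu0
        have hc1 := congrArg Prod.fst hcon
        have hc2 := congrArg Prod.snd hcon
        simp only at hc1 hc2
        refine Prod.ext ?_ ?_
        · revert hc1; cases gu.1 <;> cases u.1 <;> simp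
        · revert hc2; cases gu.2 <;> cases u.2 <;> simp
      have hzero : (2 : F) • (a * x) = 0 := isHomog_eq_zero hprod h2ax hneq
      exact smul_cancel_ne (by norm_num : (2 : F) ≠ 0) hzero
    have hx0ne : x₀ ≠ 0 := fun h => hux (by rw [h, map_zero])
    have hfin : a * gsh 1 x₀ = 0 := hax _ (hXc (gsh 1) x₀ hx₀)
    exact (mul_ne_zero_sep 1 haBN (gsh_mem_CN 1 x₀) hane
      (fun h => hx0ne (gsh_injective 1 h))) hfin

end Chunk7

section Glue
set_option linter.unusedSectionVars false
variable {F : Type*} [Field F] [CharZero F]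

lemma polyEval_algHom {A : Type*} [Semiring A] [Algebra F A] {n : ℕ}
    (φ : A →ₐ[F] A) (f : FreeAlgebra F (Fin n)) (v : Fin n → A) :
    φ (polyEval f v) = polyEval f (fun i => φ (v i)) := by
  have h : φ.comp (FreeAlgebra.lift F v) = FreeAlgebra.lift F (fun i => φ (v i)) := by
    apply FreeAlgebra.hom_ext
    funext i
    simp
  have := congrArg (fun ψ : FreeAlgebra F (Fin n) →ₐ[F] A => ψ f) h
  simpa [polyEval] using this

lemma polyEval_comp_lift {A : Type*} [Semiring A] [Algebra F A] {r n : ℕ}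
    (f : FreeAlgebra F (Fin r)) (σ : Fin r → Fin n) (v : Fin n → A) :
    FreeAlgebra.lift F v (FreeAlgebra.lift F (fun i => FreeAlgebra.ι F (σ i)) f)
      = polyEval f (fun i => v (σ i)) := by
  have h : (FreeAlgebra.lift F v).comp
        (FreeAlgebra.lift F (fun i => FreeAlgebra.ι F (σ i)))
      = FreeAlgebra.lift F (fun i => v (σ i)) := by
    apply FreeAlgebra.hom_ext
    funext i
    simp
  have := congrArg (fun ψ : FreeAlgebra F (Fin r) →ₐ[F] A => ψ f) h
  simpa [polyEval] using this

lemma polyEval_disjProd {A : Type*} [Semiring A] [Algebra F A] {r s : ℕ}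
    (f : FreeAlgebra F (Fin r)) (g : FreeAlgebra F (Fin s)) (v : Fin (r + s) → A) :
    polyEval (disjProd f g) v
      = polyEval f (fun i => v (Fin.castAdd s i)) * polyEval g (fun i => v (Fin.natAdd r i)) := by
  rw [polyEval, disjProd, map_mul, polyEval_comp_lift, polyEval_comp_lift]

end Glue

set_option maxHeartbeats 2000000 in
/-- The tensor square of the infinite-dimensional Grassmann algebra over a field
of characteristic zero has the primeness property on central polynomials. -/
theorem grassmann_tensor_grassmann_hasPrimeness (F : Type*) [Field F] [CharZero F] :
    HasPrimeness F (ExteriorAlgebra F (ℕ →₀ F) ⊗[F] ExteriorAlgebra F (ℕ →₀ F)) := by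
  constructor
  · -- existence of a proper central polynomial: the constant 1
    refine ⟨0, 1, fun v => ?_, fun hid => ?_⟩
    · rw [polyEval, map_one]
      exact Set.one_mem_center
    · have h := hid (fun i => 0)
      rw [polyEval, map_one] at h
      exact one_ne_zero h
  · intro r s f g ⟨hcent, hnid⟩
    set X : Set (GA F) := Set.range (polyEval f) with hX
    set Y : Set (GA F) := Set.range (polyEval g) with hY
    have hXc : ∀ (φ : GA F →ₐ[F] GA F), ∀ x ∈ X, φ x ∈ X := by
      rintro φ x ⟨v, rfl⟩
      exact ⟨fun i => φ (v i), (polyEval_algHom φ f v).symm⟩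
    have hYc : ∀ (φ : GA F →ₐ[F] GA F), ∀ y ∈ Y, φ y ∈ Y := by
      rintro φ y ⟨v, rfl⟩
      exact ⟨fun i => φ (v i), (polyEval_algHom φ g v).symm⟩
    have hprod : ∀ (va : Fin r → GA F) (vb : Fin s → GA F),
        polyEval f va * polyEval g vb = polyEval (disjProd f g) (Fin.addCases va vb) := by
      intro va vb
      rw [polyEval_disjProd]
      congr 1
      · congr 1
        funext i
        rw [Fin.addCases_left]
      · congr 1
        funext i
        rw [Fin.addCases_right]
    have hZ : ∀ x ∈ X, ∀ y ∈ Y, ∀ t, (x * y) * t = t * (x * y) := by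
      rintro x ⟨va, rfl⟩ y ⟨vb, rfl⟩ t
      rw [hprod va vb]
      exact (Semigroup.mem_center_iff.mp (hcent (Fin.addCases va vb)) t).symm
    have hne : ∃ x ∈ X, ∃ y ∈ Y, x * y ≠ 0 := by
      rw [IsIdPoly] at hnid
      push_neg at hnid
      obtain ⟨v₀, hv₀⟩ := hnid
      have hx : polyEval f (fun i => v₀ (Fin.castAdd s i)) ∈ X := Set.mem_range_self _
      have hy : polyEval g (fun i => v₀ (Fin.natAdd r i)) ∈ Y := Set.mem_range_self _
      refine ⟨_, hx, _, hy, ?_⟩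
      rw [← polyEval_disjProd]
      exact hv₀
    obtain ⟨hXcen, hYcen⟩ := core_theorem X Y hXc hYc hZ hne
    refine ⟨⟨fun v => ?_, fun hid => ?_⟩, ⟨fun v => ?_, fun hid => ?_⟩⟩
    · exact Semigroup.mem_center_iff.mpr (fun t => (hXcen _ ⟨v, rfl⟩ t).symm)
    · obtain ⟨x₀, ⟨va, hva⟩, y₀, hy₀, hxy⟩ := hne
      exact hxy (by rw [← hva, hid va, zero_mul])
    · exact Semigroup.mem_center_iff.mpr (fun t => (hYcen _ ⟨v, rfl⟩ t).symm)
    · obtain ⟨x₀, hx₀, y₀, ⟨vb, hvb⟩, hxy⟩ := hne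
      exact hxy (by rw [← hvb, hid vb, mul_zero])
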